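/- Let N ≥ 4 be an integer and set e := 4/(N−1). Let z₁,…,z_N ∈ ℂ be pairwise distinct and define, for 4 ≤ ℓ ≤ N, the cross-ratios y_ℓ := (z₁−z₂)(z_ℓ−z₃) / ((z₁−z₃)(z_ℓ−z₂)). Then the following identity of positive real numbers holds: ∏_{1≤i<j≤N} |z_i−z_j|^{−e} = |(z₁−z₂)(z₁−z₃)(z₂−z₃)|^{−2} · ∏_{4≤i<j≤N} |y_i−y_j|^{−e} · ∏_{ℓ=4}^{N} |y_ℓ|^{−e} |1−y_ℓ|^{−e} · ∏_{ℓ=4}^{N} ( |z₁−z₂| |z₂−z₃| / ( |z₁−z₃| |z_ℓ−z₂|² ) )². -/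

import Mathlib

open scoped BigOperators

open Finset in
private lemma pair_prod_aux {ι : Type*} [LinearOrder ι] {M₀ : Type*} [CommMonoid M₀]
    (S : Finset ι) (g : ι → M₀) :
    ∏ a ∈ (S ×ˢ S).filter (fun a => a.1 < a.2), (g a.1 * g a.2)
      = (∏ i ∈ S, g i) ^ (S.card - 1) := by
  classical
  induction S using Finset.induction_on_max with
  | empty => simp
  | insert a S ha ih =>
    have haS : a ∉ S := fun h => lt_irrefl a (ha a h)
    have hset : ((insert a S) ×ˢ (insert a S)).filter (fun b => b.1 < b.2)
        = ((S ×ˢ S).filter (fun b => b.1 < b.2)) ∪ S.image (fun b => (b, a)) := by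
      ext ⟨i, j⟩
      simp only [Finset.mem_filter, Finset.mem_product, Finset.mem_insert,
        Finset.mem_union, Finset.mem_image]
      constructor
      · rintro ⟨⟨hi, hj⟩, hij⟩
        rcases hj with rfl | hj
        · rcases hi with rfl | hi
          · exact absurd hij (lt_irrefl _)
          · exact Or.inr ⟨i, hi, rfl⟩
        · rcases hi with rfl | hi
          · exact absurd (lt_trans hij (ha j hj)) (lt_irrefl _)
          · exact Or.inl ⟨⟨hi, hj⟩, hij⟩
      · rintro (⟨⟨hi, hj⟩, hij⟩ | ⟨b, hb, h⟩)
        · exact ⟨⟨Or.inr hi, Or.inr hj⟩, hij⟩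
        · rw [Prod.mk.injEq] at h
          obtain ⟨rfl, rfl⟩ := h
          exact ⟨⟨Or.inr hb, Or.inl rfl⟩, ha b hb⟩
    have hdisj : Disjoint ((S ×ˢ S).filter (fun b => b.1 < b.2))
        (S.image (fun b => (b, a))) := by
      rw [Finset.disjoint_right]
      rintro ⟨i, j⟩ hmem hmem'
      simp only [Finset.mem_image] at hmem
      simp only [Finset.mem_filter, Finset.mem_product] at hmem'
      obtain ⟨b, hb, h⟩ := hmem
      rw [Prod.mk.injEq] at h
      obtain ⟨rfl, rfl⟩ := h
      exact haS hmem'.1.2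
    rw [hset, Finset.prod_union hdisj, ih,
      Finset.prod_image (fun x _ y _ h => (Prod.mk.injEq _ _ _ _ ▸ h).1 ▸ rfl)]
    rw [Finset.prod_mul_distrib]
    simp only []
    rw [Finset.prod_const, Finset.prod_insert haS,
      Finset.card_insert_of_notMem haS, Nat.add_sub_cancel, mul_pow]
    rcases S.eq_empty_or_nonempty with rfl | hS
    · simp
    · have h1 : 1 ≤ S.card := Finset.card_pos.mpr hS
      have : S.card - 1 + 1 = S.card := by omega
      rw [show (∏ i ∈ S, g i) ^ (S.card - 1) * ((∏ i ∈ S, g i) * g a ^ S.card)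
            = ((∏ i ∈ S, g i) ^ (S.card - 1) * (∏ i ∈ S, g i)) * g a ^ S.card by
          rw [mul_assoc],
        ← pow_succ, this, mul_comm]

private lemma pair_card_aux {ι : Type*} [LinearOrder ι] (S : Finset ι) :
    2 * ((S ×ˢ S).filter (fun a => a.1 < a.2)).card = S.card * (S.card - 1) := by
  classical
  have h := pair_prod_aux S (fun _ => (2 : ℕ))
  simp only [Finset.prod_const, ← pow_mul] at h
  have h2 : (2 : ℕ) ^ (2 * ((S ×ˢ S).filter (fun a => a.1 < a.2)).card)
      = 2 ^ (S.card * (S.card - 1)) := by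
    rw [pow_mul]
    norm_num at h
    rw [← h]
    norm_num
  exact Nat.pow_right_injective (le_refl 2) h2

private lemma scalar_key {a b c E : ℝ} (ha : 0 < a) (hb : 0 < b) (hc : 0 < c) (p M : ℕ)
    (h1 : (-2) + E * p + E * M + 2 * M = E)
    (h2 : (-2) + (-E) * p + 2 * (-E) * M + (-2) * M = E) :
    (a * b * c) ^ (-2 : ℝ) * ((a ^ E * c ^ E * b ^ (-E)) ^ p *
      ((a ^ E * c ^ E * (b ^ (-E) * b ^ (-E))) ^ M * ((a * c / b) ^ 2) ^ M))
      = a ^ E * (b ^ E * c ^ E) := by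
  obtain ⟨α, rfl⟩ : ∃ x, Real.exp x = a := ⟨Real.log a, Real.exp_log ha⟩
  obtain ⟨β, rfl⟩ : ∃ x, Real.exp x = b := ⟨Real.log b, Real.exp_log hb⟩
  obtain ⟨γ, rfl⟩ : ∃ x, Real.exp x = c := ⟨Real.log c, Real.exp_log hc⟩
  rw [← Real.exp_add, ← Real.exp_add]
  simp only [Real.rpow_def_of_pos (Real.exp_pos _), Real.log_exp, ← Real.exp_add,
    ← Real.exp_sub, ← Real.exp_nat_mul, ← Real.exp_nsmul, nsmul_eq_mul]
  rw [Real.exp_eq_exp]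
  push_cast
  linear_combination α * h1 + γ * h1 + β * h2

set_option maxHeartbeats 2000000 in
theorem vandermonde_cross_ratio_factorization (N : ℕ) (hN : 4 ≤ N) (z : Fin N → ℂ)
    (hz : Function.Injective z) :
    let z₁ := z ⟨0, by omega⟩
    let z₂ := z ⟨1, by omega⟩
    let z₃ := z ⟨2, by omega⟩
    let y : Fin N → ℂ := fun ℓ => ((z₁ - z₂) * (z ℓ - z₃)) / ((z₁ - z₃) * (z ℓ - z₂))
    (∏ a ∈ Finset.univ.filter (fun a : Fin N × Fin N => a.1 < a.2),
        ‖z a.1 - z a.2‖ ^ (-(4 / ((N : ℝ) - 1)))) =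
      ‖(z₁ - z₂) * (z₁ - z₃) * (z₂ - z₃)‖ ^ (-2 : ℝ) *
        (∏ a ∈ Finset.univ.filter (fun a : Fin N × Fin N => 3 ≤ (a.1 : ℕ) ∧ a.1 < a.2),
          ‖y a.1 - y a.2‖ ^ (-(4 / ((N : ℝ) - 1)))) *
        (∏ ℓ ∈ Finset.univ.filter (fun ℓ : Fin N => 3 ≤ (ℓ : ℕ)),
          ‖y ℓ‖ ^ (-(4 / ((N : ℝ) - 1))) * ‖1 - y ℓ‖ ^ (-(4 / ((N : ℝ) - 1)))) *
        ∏ ℓ ∈ Finset.univ.filter (fun ℓ : Fin N => 3 ≤ (ℓ : ℕ)),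
          (‖z₁ - z₂‖ * ‖z₂ - z₃‖ / (‖z₁ - z₃‖ * ‖z ℓ - z₂‖ ^ 2)) ^ 2 := by
  intro z₁ z₂ z₃ y
  classical
  obtain ⟨E, hE⟩ : ∃ x : ℝ, x = -(4 / ((N : ℝ) - 1)) := ⟨_, rfl⟩
  rw [← hE]
  have hzne : ∀ i j : Fin N, (i : ℕ) ≠ (j : ℕ) → z i ≠ z j := by
    intro i j h heq
    exact h (congrArg Fin.val (hz heq))
  have hy1 : ∀ ℓ : Fin N, y ℓ = ((z₁ - z₂) * (z ℓ - z₃)) / ((z₁ - z₃) * (z ℓ - z₂)) :=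
    fun _ => rfl
  have hz1 : z₁ = z ⟨0, by omega⟩ := rfl
  have hz2 : z₂ = z ⟨1, by omega⟩ := rfl
  have hz3 : z₃ = z ⟨2, by omega⟩ := rfl
  clear_value z₁ z₂ z₃ y
  have hA : z₁ ≠ z₂ := by rw [hz1, hz2]; exact hzne _ _ (by simp)
  have hB : z₁ ≠ z₃ := by rw [hz1, hz3]; exact hzne _ _ (by simp)
  have hC : z₂ ≠ z₃ := by rw [hz2, hz3]; exact hzne _ _ (by simp)
  set aa := ‖z₁ - z₂‖ with haa
  set bb := ‖z₁ - z₃‖ with hbb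
  set cc := ‖z₂ - z₃‖ with hcc
  have ha : 0 < aa := by rw [haa, norm_sub_pos_iff]; exact hA
  have hb : 0 < bb := by rw [hbb, norm_sub_pos_iff]; exact hB
  have hc : 0 < cc := by rw [hcc, norm_sub_pos_iff]; exact hC
  set S : Finset (Fin N) := Finset.univ.filter (fun ℓ : Fin N => 3 ≤ (ℓ : ℕ)) with hSdef
  have hmemS : ∀ ℓ : Fin N, ℓ ∈ S → 3 ≤ (ℓ : ℕ) := by
    intro ℓ h
    simpa [hSdef] using h
  have hP2 : Finset.univ.filter (fun a : Fin N × Fin N => 3 ≤ (a.1 : ℕ) ∧ a.1 < a.2)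
      = (S ×ˢ S).filter (fun a => a.1 < a.2) := by
    ext ⟨i, j⟩
    simp only [hSdef, Finset.mem_filter, Finset.mem_product, Finset.mem_univ, true_and,
      Fin.lt_def]
    omega
  rw [hP2]
  set P2 : Finset (Fin N × Fin N) := (S ×ˢ S).filter (fun a => a.1 < a.2) with hP2def
  set M := S.card with hM
  set p := P2.card with hp
  -- positivity on S
  have hU : ∀ ℓ ∈ S, 0 < ‖z ℓ - z₁‖ := by
    intro ℓ h
    rw [hz1, norm_sub_pos_iff]
    exact hzne _ _ (by have := hmemS ℓ h; simp; omega)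
  have hV : ∀ ℓ ∈ S, 0 < ‖z ℓ - z₂‖ := by
    intro ℓ h
    rw [hz2, norm_sub_pos_iff]
    exact hzne _ _ (by have := hmemS ℓ h; simp; omega)
  have hW : ∀ ℓ ∈ S, 0 < ‖z ℓ - z₃‖ := by
    intro ℓ h
    rw [hz3, norm_sub_pos_iff]
    exact hzne _ _ (by have := hmemS ℓ h; simp; omega)
  -- cardinalities
  have hMN : M = N - 3 := by
    have hcompl : Finset.univ.filter (fun ℓ : Fin N => ¬ 3 ≤ (ℓ : ℕ))
        = {(⟨0, by omega⟩ : Fin N), ⟨1, by omega⟩, ⟨2, by omega⟩} := by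
      ext ℓ
      simp [Fin.ext_iff]
      omega
    have hcard3 : (Finset.univ.filter (fun ℓ : Fin N => ¬ 3 ≤ (ℓ : ℕ))).card = 3 := by
      rw [hcompl, Finset.card_insert_of_notMem (by simp [Fin.ext_iff]),
        Finset.card_insert_of_notMem (by simp [Fin.ext_iff]), Finset.card_singleton]
    have hsum := Finset.card_filter_add_card_filter_not
      (s := (Finset.univ : Finset (Fin N))) (p := fun ℓ : Fin N => 3 ≤ (ℓ : ℕ))
    rw [Finset.card_univ, Fintype.card_fin] at hsum
    rw [hM, hSdef]
    omega
  have hM1 : 1 ≤ M := by omega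
  have hpM : 2 * p = M * (M - 1) := pair_card_aux S
  have hN1 : ((N : ℝ) - 1) ≠ 0 := by
    have : (4 : ℝ) ≤ (N : ℝ) := by exact_mod_cast hN
    linarith
  have hMR : (M : ℝ) = (N : ℝ) - 3 := by
    rw [hMN, Nat.cast_sub (by omega)]
    norm_num
  have hpR : 2 * (p : ℝ) = (M : ℝ) * ((M : ℝ) - 1) := by
    have h' : ((2 * p : ℕ) : ℝ) = ((M * (M - 1) : ℕ) : ℝ) := by rw [hpM]
    push_cast [Nat.cast_sub hM1] at h'
    linarith
  have hpR' : (p : ℝ) = (M : ℝ) * ((M : ℝ) - 1) / 2 := by linarith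
  -- exponent identities
  have e1 : (-2 : ℝ) + E * p + E * M + 2 * M = E := by
    rw [hpR', hMR, hE]
    field_simp
    ring
  have e2 : (-2 : ℝ) + (-E) * p + 2 * (-E) * M + (-2) * M = E := by
    rw [hpR', hMR, hE]
    field_simp
    ring
  have e3 : -E * ((M : ℝ) - 1) + (-E + -E) + -4 = E := by
    rw [hMR, hE]
    field_simp
    ring
  -- rpow splitting helpers
  have hsplit4 : ∀ x t u v : ℝ, 0 < x → 0 ≤ t → 0 < u → 0 < v →
      (x * t / (u * v)) ^ E = x ^ E * t ^ E * (u ^ (-E) * v ^ (-E)) := by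
    intro x t u v hx ht hu hv
    rw [Real.div_rpow (by positivity) (by positivity), Real.mul_rpow hx.le ht,
      Real.mul_rpow hu.le hv.le, Real.rpow_neg hu.le, Real.rpow_neg hv.le,
      div_eq_mul_inv, mul_inv]
  have hsplit6 : ∀ t vi vj : ℝ, 0 ≤ t → 0 < vi → 0 < vj →
      (aa * cc * t / (bb * (vi * vj))) ^ E
        = aa ^ E * cc ^ E * bb ^ (-E) * (t ^ E * (vi ^ (-E) * vj ^ (-E))) := by
    intro t vi vj ht hvi hvj
    rw [Real.div_rpow (by positivity) (by positivity), Real.mul_rpow (by positivity) ht,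
      Real.mul_rpow ha.le hc.le, Real.mul_rpow hb.le (by positivity),
      Real.mul_rpow hvi.le hvj.le, Real.rpow_neg hb.le, Real.rpow_neg hvi.le,
      Real.rpow_neg hvj.le, div_eq_mul_inv, mul_inv, mul_inv]
    ring
  -- structural blocks
  have hLHS : (∏ a ∈ Finset.univ.filter (fun a : Fin N × Fin N => a.1 < a.2),
        ‖z a.1 - z a.2‖ ^ E)
      = (aa ^ E * (bb ^ E * cc ^ E)) *
        ((∏ ℓ ∈ S, (‖z ℓ - z₁‖ ^ E * (‖z ℓ - z₂‖ ^ E * ‖z ℓ - z₃‖ ^ E))) *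
          ∏ a ∈ P2, ‖z a.1 - z a.2‖ ^ E) := by
    rw [← Finset.prod_filter_mul_prod_filter_not
      (Finset.univ.filter (fun a : Fin N × Fin N => a.1 < a.2))
      (fun a : Fin N × Fin N => (a.2 : ℕ) < 3) (fun a => ‖z a.1 - z a.2‖ ^ E)]
    rw [← Finset.prod_filter_mul_prod_filter_not
      ((Finset.univ.filter (fun a : Fin N × Fin N => a.1 < a.2)).filter
        (fun a : Fin N × Fin N => ¬ (a.2 : ℕ) < 3))
      (fun a : Fin N × Fin N => (a.1 : ℕ) < 3) (fun a => ‖z a.1 - z a.2‖ ^ E)]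
    have hs0 : (Finset.univ.filter (fun a : Fin N × Fin N => a.1 < a.2)).filter
        (fun a => (a.2 : ℕ) < 3)
        = {((⟨0, by omega⟩ : Fin N), (⟨1, by omega⟩ : Fin N)),
           (⟨0, by omega⟩, ⟨2, by omega⟩), (⟨1, by omega⟩, ⟨2, by omega⟩)} := by
      ext ⟨i, j⟩
      simp only [Finset.mem_filter, Finset.mem_univ, true_and, Finset.mem_insert,
        Finset.mem_singleton, Prod.mk.injEq, Fin.lt_def, Fin.ext_iff]
      omega
    have hs1 : ((Finset.univ.filter (fun a : Fin N × Fin N => a.1 < a.2)).filter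
        (fun a => ¬ (a.2 : ℕ) < 3)).filter (fun a => (a.1 : ℕ) < 3)
        = ({⟨0, by omega⟩, ⟨1, by omega⟩, ⟨2, by omega⟩} : Finset (Fin N)) ×ˢ S := by
      ext ⟨i, j⟩
      simp only [Finset.mem_filter, Finset.mem_univ, true_and, Finset.mem_product,
        Finset.mem_insert, Finset.mem_singleton, hSdef, Fin.lt_def, Fin.ext_iff]
      omega
    have hs2 : ((Finset.univ.filter (fun a : Fin N × Fin N => a.1 < a.2)).filter
        (fun a => ¬ (a.2 : ℕ) < 3)).filter (fun a => ¬ (a.1 : ℕ) < 3) = P2 := by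
      rw [hP2def]
      ext ⟨i, j⟩
      simp only [Finset.mem_filter, Finset.mem_univ, true_and, Finset.mem_product,
        hSdef, Fin.lt_def]
      omega
    rw [hs0, hs1, hs2]
    rw [Finset.prod_insert (by simp [Prod.ext_iff, Fin.ext_iff]),
      Finset.prod_insert (by simp [Prod.ext_iff, Fin.ext_iff]),
      Finset.prod_singleton]
    rw [Finset.prod_product, Finset.prod_insert (by simp [Fin.ext_iff]),
      Finset.prod_insert (by simp [Fin.ext_iff]), Finset.prod_singleton]
    rw [← Finset.prod_mul_distrib, ← Finset.prod_mul_distrib]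
    have hmid : ∏ ℓ ∈ S, (‖z (⟨0, by omega⟩ : Fin N) - z ℓ‖ ^ E *
          (‖z (⟨1, by omega⟩ : Fin N) - z ℓ‖ ^ E * ‖z (⟨2, by omega⟩ : Fin N) - z ℓ‖ ^ E))
        = ∏ ℓ ∈ S, (‖z ℓ - z (⟨0, by omega⟩ : Fin N)‖ ^ E *
          (‖z ℓ - z (⟨1, by omega⟩ : Fin N)‖ ^ E * ‖z ℓ - z (⟨2, by omega⟩ : Fin N)‖ ^ E)) := by
      refine Finset.prod_congr rfl fun ℓ hℓ => ?_
      rw [norm_sub_rev (z ℓ), norm_sub_rev (z ℓ), norm_sub_rev (z ℓ)]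
    rw [haa, hbb, hcc, hz1, hz2, hz3, ← hmid]
  have hT2 : (∏ a ∈ P2, ‖y a.1 - y a.2‖ ^ E)
      = (aa ^ E * cc ^ E * bb ^ (-E)) ^ p *
        ((∏ a ∈ P2, ‖z a.1 - z a.2‖ ^ E) *
          ∏ ℓ ∈ S, ‖z ℓ - z₂‖ ^ (-E * ((M : ℝ) - 1))) := by
    have hpt : ∀ a ∈ P2, ‖y a.1 - y a.2‖ ^ E
        = (aa ^ E * cc ^ E * bb ^ (-E)) *
          (‖z a.1 - z a.2‖ ^ E * (‖z a.1 - z₂‖ ^ (-E) * ‖z a.2 - z₂‖ ^ (-E))) := by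
      intro a hm
      rw [hP2def] at hm
      simp only [Finset.mem_filter, Finset.mem_product] at hm
      obtain ⟨⟨hm1, hm2⟩, _⟩ := hm
      have hv1 : z a.1 - z₂ ≠ 0 := by
        rw [hz2, sub_ne_zero]
        exact hzne _ _ (by have := hmemS _ hm1; simp; omega)
      have hv2 : z a.2 - z₂ ≠ 0 := by
        rw [hz2, sub_ne_zero]
        exact hzne _ _ (by have := hmemS _ hm2; simp; omega)
      have hbz : z₁ - z₃ ≠ (0 : ℂ) := sub_ne_zero.mpr hB
      have hyd : y a.1 - y a.2
          = -((z₁ - z₂) * (z₂ - z₃) * (z a.1 - z a.2)) /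
            ((z₁ - z₃) * ((z a.1 - z₂) * (z a.2 - z₂))) := by
        rw [hy1 a.1, hy1 a.2]
        field_simp
        ring
      rw [hyd, norm_div, norm_neg, norm_mul, norm_mul, norm_mul, norm_mul,
        ← haa, ← hcc, ← hbb]
      exact hsplit6 _ _ _ (norm_nonneg _) (hV _ hm1) (hV _ hm2)
    rw [Finset.prod_congr rfl hpt, Finset.prod_mul_distrib, Finset.prod_const, ← hp,
      Finset.prod_mul_distrib]
    congr 1
    congr 1
    rw [hP2def,
      pair_prod_aux S (fun ℓ => ‖z ℓ - z₂‖ ^ (-E)), ← hM, ← Finset.prod_pow]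
    refine Finset.prod_congr rfl fun ℓ hℓ => ?_
    rw [← Real.rpow_natCast (‖z ℓ - z₂‖ ^ (-E)) (M - 1),
      ← Real.rpow_mul (norm_nonneg _), Nat.cast_sub hM1, Nat.cast_one]
  have hT3 : (∏ ℓ ∈ S, ‖y ℓ‖ ^ E * ‖1 - y ℓ‖ ^ E)
      = (aa ^ E * cc ^ E * (bb ^ (-E) * bb ^ (-E))) ^ M *
        ∏ ℓ ∈ S, (‖z ℓ - z₁‖ ^ E * (‖z ℓ - z₃‖ ^ E * ‖z ℓ - z₂‖ ^ (-E + -E))) := by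
    have hpt : ∀ ℓ ∈ S, ‖y ℓ‖ ^ E * ‖1 - y ℓ‖ ^ E
        = (aa ^ E * cc ^ E * (bb ^ (-E) * bb ^ (-E))) *
          (‖z ℓ - z₁‖ ^ E * (‖z ℓ - z₃‖ ^ E * ‖z ℓ - z₂‖ ^ (-E + -E))) := by
      intro ℓ hℓ
      have hvz : z ℓ - z₂ ≠ 0 := by
        rw [hz2, sub_ne_zero]
        exact hzne _ _ (by have := hmemS ℓ hℓ; simp; omega)
      have hbz : z₁ - z₃ ≠ (0 : ℂ) := sub_ne_zero.mpr hB
      have hy : ‖y ℓ‖ = aa * ‖z ℓ - z₃‖ / (bb * ‖z ℓ - z₂‖) := by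
        rw [hy1 ℓ, norm_div, norm_mul, norm_mul, ← haa, ← hbb]
      have h1y : ‖1 - y ℓ‖ = cc * ‖z ℓ - z₁‖ / (bb * ‖z ℓ - z₂‖) := by
        have h2 : 1 - y ℓ = ((z₂ - z₃) * (z ℓ - z₁)) / ((z₁ - z₃) * (z ℓ - z₂)) := by
          rw [hy1 ℓ]
          field_simp
          ring
        rw [h2, norm_div, norm_mul, norm_mul, ← hcc, ← hbb]
      rw [hy, h1y, hsplit4 _ _ _ _ ha (norm_nonneg _) hb (hV ℓ hℓ),
        hsplit4 _ _ _ _ hc (norm_nonneg _) hb (hV ℓ hℓ),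
        Real.rpow_add (hV ℓ hℓ)]
      ring
    rw [Finset.prod_congr rfl hpt, Finset.prod_mul_distrib, Finset.prod_const, ← hM]
  have hT4 : (∏ ℓ ∈ S, (aa * cc / (bb * ‖z ℓ - z₂‖ ^ 2)) ^ 2)
      = ((aa * cc / bb) ^ 2) ^ M * ∏ ℓ ∈ S, ‖z ℓ - z₂‖ ^ (-(4 : ℝ)) := by
    have hpt : ∀ ℓ ∈ S, (aa * cc / (bb * ‖z ℓ - z₂‖ ^ 2)) ^ 2
        = ((aa * cc / bb) ^ 2) * ‖z ℓ - z₂‖ ^ (-(4 : ℝ)) := by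
      intro ℓ hℓ
      have hv := hV ℓ hℓ
      rw [Real.rpow_neg (norm_nonneg _), show (4 : ℝ) = ((4 : ℕ) : ℝ) by norm_num,
        Real.rpow_natCast]
      field_simp
    rw [Finset.prod_congr rfl hpt, Finset.prod_mul_distrib, Finset.prod_const, ← hM]
  have hVcomb : (∏ ℓ ∈ S, ‖z ℓ - z₂‖ ^ (-E * ((M : ℝ) - 1))) *
      ((∏ ℓ ∈ S, (‖z ℓ - z₁‖ ^ E * (‖z ℓ - z₃‖ ^ E * ‖z ℓ - z₂‖ ^ (-E + -E)))) *
        ∏ ℓ ∈ S, ‖z ℓ - z₂‖ ^ (-(4 : ℝ)))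
      = ∏ ℓ ∈ S, (‖z ℓ - z₁‖ ^ E * (‖z ℓ - z₂‖ ^ E * ‖z ℓ - z₃‖ ^ E)) := by
    rw [← Finset.prod_mul_distrib, ← Finset.prod_mul_distrib]
    refine Finset.prod_congr rfl fun ℓ hℓ => ?_
    have hv := hV ℓ hℓ
    rw [show ‖z ℓ - z₂‖ ^ (-E * ((M : ℝ) - 1)) *
          (‖z ℓ - z₁‖ ^ E * (‖z ℓ - z₃‖ ^ E * ‖z ℓ - z₂‖ ^ (-E + -E)) *
            ‖z ℓ - z₂‖ ^ (-(4 : ℝ)))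
        = ‖z ℓ - z₁‖ ^ E *
            ((‖z ℓ - z₂‖ ^ (-E * ((M : ℝ) - 1)) * ‖z ℓ - z₂‖ ^ (-E + -E) *
              ‖z ℓ - z₂‖ ^ (-(4 : ℝ))) * ‖z ℓ - z₃‖ ^ E) by ring,
      ← Real.rpow_add hv, ← Real.rpow_add hv, e3]
  have hSC : ‖(z₁ - z₂) * (z₁ - z₃) * (z₂ - z₃)‖ ^ (-2 : ℝ) *
      ((aa ^ E * cc ^ E * bb ^ (-E)) ^ p *
        ((aa ^ E * cc ^ E * (bb ^ (-E) * bb ^ (-E))) ^ M * ((aa * cc / bb) ^ 2) ^ M))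
      = aa ^ E * (bb ^ E * cc ^ E) := by
    rw [norm_mul, norm_mul, ← haa, ← hbb, ← hcc]
    exact scalar_key ha hb hc p M e1 e2
  -- assembly
  rw [hLHS, hT2, hT3, hT4]
  rw [show ‖(z₁ - z₂) * (z₁ - z₃) * (z₂ - z₃)‖ ^ (-2 : ℝ) *
        ((aa ^ E * cc ^ E * bb ^ (-E)) ^ p *
          ((∏ a ∈ P2, ‖z a.1 - z a.2‖ ^ E) *
            ∏ ℓ ∈ S, ‖z ℓ - z₂‖ ^ (-E * ((M : ℝ) - 1)))) *
        ((aa ^ E * cc ^ E * (bb ^ (-E) * bb ^ (-E))) ^ M *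
          ∏ ℓ ∈ S, (‖z ℓ - z₁‖ ^ E * (‖z ℓ - z₃‖ ^ E * ‖z ℓ - z₂‖ ^ (-E + -E)))) *
        (((aa * cc / bb) ^ 2) ^ M * ∏ ℓ ∈ S, ‖z ℓ - z₂‖ ^ (-(4 : ℝ)))
      = (‖(z₁ - z₂) * (z₁ - z₃) * (z₂ - z₃)‖ ^ (-2 : ℝ) *
          ((aa ^ E * cc ^ E * bb ^ (-E)) ^ p *
            ((aa ^ E * cc ^ E * (bb ^ (-E) * bb ^ (-E))) ^ M * ((aa * cc / bb) ^ 2) ^ M))) *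
        (((∏ ℓ ∈ S, ‖z ℓ - z₂‖ ^ (-E * ((M : ℝ) - 1))) *
          ((∏ ℓ ∈ S, (‖z ℓ - z₁‖ ^ E * (‖z ℓ - z₃‖ ^ E * ‖z ℓ - z₂‖ ^ (-E + -E)))) *
            ∏ ℓ ∈ S, ‖z ℓ - z₂‖ ^ (-(4 : ℝ)))) *
          ∏ a ∈ P2, ‖z a.1 - z a.2‖ ^ E) from by ring,
    hSC, hVcomb]
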